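/- Let d ≥ 1, n ≥ 1, and N ≥ 1 be integers, and let f : [0, 1]^d → ℝ be n times continuously differentiable with |D^α f(x)| ≤ 1 for all x ∈ [0, 1]^d and all multi-indices α with |α| ≤ n. Define the local Taylor approximation f_N(x) = Σ_{m ∈ {0,…,N}^d} φ_m(x)·P_m(x), where P_m is the degree n−1 Taylor polynomial of f at x = m/N and φ_m(x) = ∏_{k=1}^d ψ_{m_k}(x_k) is the tensor-product partition-of-unity function with ψ_{m_k}(x) = 1 if |x − m_k/N| < 1/(3N), ψ_{m_k}(x) = 0 if |x − m_k/N| > 2/(3N), and ψ_{m_k}(x) = 2 − 3N·|x − m_k/N| otherwise. Then max_{x ∈ [0,1]^d} |f(x) − f_N(x)| ≤ (2^d · d^n / n!) · N^{−n}. -/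

import Mathlib

open Real Set

/-- The unit cube `[0,1]^d`. -/
def unitCube (d : ℕ) : Set (Fin d → ℝ) := {x | ∀ i, x i ∈ Set.Icc (0 : ℝ) 1}

/-- Iterated partial derivative (within a set `s`) along a list of coordinate
directions. -/
noncomputable def iterPartialWithin (d : ℕ) (s : Set (Fin d → ℝ)) :
    List (Fin d) → ((Fin d → ℝ) → ℝ) → ((Fin d → ℝ) → ℝ)
  | [], f => f
  | i :: l, f => iterPartialWithin d s l (fun x => fderivWithin ℝ f s x (Pi.single i 1))

/-- The list of coordinate directions associated to a multi-index `α`: coordinate `k`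
repeated `α k` times. -/
def multiIndexList (d : ℕ) (α : Fin d → ℕ) : List (Fin d) :=
  (List.ofFn fun k : Fin d => List.replicate (α k) k).flatten

/-- The multi-index partial derivative `D^α f` within a set. -/
noncomputable def multiPartialWithin (d : ℕ) (s : Set (Fin d → ℝ)) (α : Fin d → ℕ)
    (f : (Fin d → ℝ) → ℝ) : (Fin d → ℝ) → ℝ :=
  iterPartialWithin d s (multiIndexList d α) f

/-- The multi-indices `α` with `|α| < n`. -/
def multiIndicesLT (d n : ℕ) : Finset (Fin d → ℕ) :=
  (Fintype.piFinset fun _ : Fin d => Finset.range n).filter fun α => (∑ k, α k) < n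

/-- The piecewise linear partition-of-unity bump `ψ_{m_k}`. -/
noncomputable def psiBump (N mk : ℕ) (x : ℝ) : ℝ :=
  if |x - (mk : ℝ) / N| < 1 / (3 * N) then 1
  else if 2 / (3 * N) < |x - (mk : ℝ) / N| then 0
  else 2 - 3 * N * |x - (mk : ℝ) / N|

/-- The tensor-product partition-of-unity function `φ_m`. -/
noncomputable def phiBump (d N : ℕ) (m : Fin d → ℕ) (x : Fin d → ℝ) : ℝ :=
  ∏ k, psiBump N (m k) (x k)

/-- The degree `n - 1` Taylor polynomial of `f` at `m/N` (derivatives within `[0,1]^d`). -/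
noncomputable def taylorPoly (d n N : ℕ) (f : (Fin d → ℝ) → ℝ) (m : Fin d → ℕ)
    (x : Fin d → ℝ) : ℝ :=
  ∑ α ∈ multiIndicesLT d n,
    multiPartialWithin d (unitCube d) α f (fun k => (m k : ℝ) / N) /
        (∏ k, (Nat.factorial (α k) : ℝ)) *
      ∏ k, (x k - (m k : ℝ) / N) ^ α k

/-- The local Taylor approximation `f_N`. -/
noncomputable def localTaylor (d n N : ℕ) (f : (Fin d → ℝ) → ℝ) (x : Fin d → ℝ) : ℝ :=
  ∑ m ∈ Fintype.piFinset fun _ : Fin d => Finset.range (N + 1),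
    phiBump d N m x * taylorPoly d n N f m x


section Psi
variable {N m : ℕ} {x : ℝ}

lemma habs (hN : 0 < (N:ℝ)) : |x - (m:ℝ)/N| = |N*x - m| / N := by
  have h : x - (m:ℝ)/N = (N*x - m)/N := by field_simp
  rw [h, abs_div, abs_of_pos hN]

lemma psi_one (hN : 0 < (N:ℝ)) (h : |N*x - m| < 1/3) : psiBump N m x = 1 := by
  unfold psiBump
  rw [if_pos]
  rw [habs hN, div_lt_div_iff₀ hN (by positivity)]
  nlinarith [abs_nonneg (N*x - (m:ℝ))]

lemma psi_zero (hN : 0 < (N:ℝ)) (h : 2/3 < |N*x - m|) : psiBump N m x = 0 := by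
  unfold psiBump
  rw [if_neg, if_pos]
  · rw [habs hN, div_lt_div_iff₀ (by positivity) hN]
    nlinarith
  · rw [habs hN, div_lt_div_iff₀ hN (by positivity)]
    push_neg
    nlinarith [abs_nonneg (N*x - (m:ℝ))]

lemma psi_ramp (hN : 0 < (N:ℝ)) (h1 : 1/3 ≤ |N*x - m|) (h2 : |N*x - m| ≤ 2/3) :
    psiBump N m x = 2 - 3 * |N*x - m| := by
  unfold psiBump
  rw [if_neg, if_neg]
  · rw [habs hN]
    field_simp
  · rw [habs hN]
    push_neg
    rw [div_le_div_iff₀ hN (by positivity)]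
    nlinarith
  · rw [habs hN]
    push_neg
    rw [div_le_div_iff₀ (by positivity) hN]
    nlinarith

lemma psi_nonneg (hN : 0 < (N:ℝ)) : 0 ≤ psiBump N m x := by
  rcases lt_or_ge (|N*x - m|) (1/3) with h | h
  · rw [psi_one hN h]; norm_num
  rcases le_or_gt (|N*x - m|) (2/3) with h2 | h2
  · rw [psi_ramp hN h h2]; nlinarith
  · rw [psi_zero hN h2]

lemma psi_le_one (hN : 0 < (N:ℝ)) : psiBump N m x ≤ 1 := by
  rcases lt_or_ge (|N*x - m|) (1/3) with h | h
  · rw [psi_one hN h]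
  rcases le_or_gt (|N*x - m|) (2/3) with h2 | h2
  · rw [psi_ramp hN h h2]; nlinarith
  · rw [psi_zero hN h2]; norm_num

lemma psi_support (hN : 0 < (N:ℝ)) (h : psiBump N m x ≠ 0) : |N*x - m| ≤ 2/3 := by
  by_contra hc
  push_neg at hc
  exact h (psi_zero hN hc)

lemma nat_cast_le_sub {b c : ℕ} (h : b < c) : (b:ℝ) + 1 ≤ c := by exact_mod_cast h

lemma psi_sum_pair (hNR : 0 < (N:ℝ)) {c : ℕ} (hcN : c + 1 ≤ N)
    (h1 : 1/3 ≤ N*x - c) (h2 : N*x - c ≤ 2/3) :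
    ∑ mk ∈ Finset.range (N+1), psiBump N mk x = 1 := by
  have hsub : ({c, c+1} : Finset ℕ) ⊆ Finset.range (N+1) := by
    intro b hb
    simp only [Finset.mem_insert, Finset.mem_singleton] at hb
    rcases hb with rfl | rfl <;> simp [Finset.mem_range] <;> omega
  rw [← Finset.sum_subset hsub]
  · rw [Finset.sum_pair (by omega)]
    have hv1 : psiBump N c x = 2 - 3*(N*x - c) := by
      rw [psi_ramp hNR (by rw [abs_of_nonneg (by linarith)]; linarith)
        (by rw [abs_of_nonneg (by linarith)]; linarith)]
      rw [abs_of_nonneg (by linarith)]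
    have hv2 : psiBump N (c+1) x = 3*(N*x - c) - 1 := by
      have he : |N*x - ((c+1:ℕ):ℝ)| = 1 - (N*x - c) := by
        push_cast
        rw [abs_of_nonpos (by linarith)]
        ring
      rw [psi_ramp hNR (by rw [he]; linarith) (by rw [he]; linarith), he]
      ring
    rw [hv1, hv2]
    ring
  · intro b _ hbn
    simp only [Finset.mem_insert, Finset.mem_singleton] at hbn
    push_neg at hbn
    apply psi_zero hNR
    rcases lt_or_ge b c with hb | hb
    · have := nat_cast_le_sub hb
      rw [abs_of_nonneg (by linarith)]
      linarith
    · have hb2 : c + 1 < b := by omega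
      have := nat_cast_le_sub hb2
      push_cast at this
      rw [abs_of_nonpos (by linarith)]
      linarith

lemma psi_sum (hN : 1 ≤ N) (hx0 : 0 ≤ x) (hx1 : x ≤ 1) :
    ∑ mk ∈ Finset.range (N+1), psiBump N mk x = 1 := by
  have hNR : 0 < (N:ℝ) := by exact_mod_cast hN
  have hr0 : 0 ≤ N*x := by positivity
  have hrN : N*x ≤ N := by nlinarith
  set j : ℕ := ⌊N*x + 1/2⌋₊ with hj
  have hj1 : (j:ℝ) ≤ N*x + 1/2 := Nat.floor_le (by linarith)
  have hj2 : N*x + 1/2 < j + 1 := Nat.lt_floor_add_one _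
  have hjN : j ≤ N := by
    have h : (j:ℝ) < (N:ℝ) + 1 := by linarith
    have : j < N + 1 := by exact_mod_cast h
    omega
  rcases abs_cases (N*x - (j:ℝ)) with ⟨heq, hpos⟩ | ⟨heq, hneg⟩
  · rcases lt_or_ge (N*x - (j:ℝ)) (1/3) with hA | hA
    · -- single bump at j
      rw [Finset.sum_eq_single_of_mem j (Finset.mem_range.mpr (Nat.lt_succ_of_le hjN))]
      · exact psi_one hNR (by rw [abs_of_nonneg hpos]; linarith)
      · intro b _ hb
        apply psi_zero hNR
        rcases lt_or_ge b j with hbj | hbj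
        · have := nat_cast_le_sub hbj
          rw [abs_of_nonneg (by linarith)]
          linarith
        · have hb2 : j < b := lt_of_le_of_ne hbj (Ne.symm hb)
          have := nat_cast_le_sub hb2
          rw [abs_of_nonpos (by linarith)]
          linarith
    · -- pair {j, j+1}
      have hjN' : j + 1 ≤ N := by
        have h : (j:ℝ) < N := by linarith
        have : j < N := by exact_mod_cast h
        omega
      exact psi_sum_pair hNR hjN' hA (by linarith)
  · rcases lt_or_ge ((j:ℝ) - N*x) (1/3) with hA | hA
    · rw [Finset.sum_eq_single_of_mem j (Finset.mem_range.mpr (Nat.lt_succ_of_le hjN))]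
      · exact psi_one hNR (by rw [abs_sub_comm, abs_of_nonneg (by linarith)]; linarith)
      · intro b _ hb
        apply psi_zero hNR
        rcases lt_or_ge b j with hbj | hbj
        · have := nat_cast_le_sub hbj
          rw [abs_of_nonneg (by linarith)]
          linarith
        · have hb2 : j < b := lt_of_le_of_ne hbj (Ne.symm hb)
          have := nat_cast_le_sub hb2
          rw [abs_of_nonpos (by linarith)]
          linarith
    · -- pair {j-1, j}
      have hj1' : 1 ≤ j := by
        by_contra hc
        push_neg at hc
        have : j = 0 := by omega
        rw [this] at hA
        simp at hA
        linarith
      have hcast : ((j-1:ℕ):ℝ) = (j:ℝ) - 1 := by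
        have h : j - 1 + 1 = j := by omega
        have := congrArg (fun n : ℕ => (n:ℝ)) h
        push_cast at this
        linarith
      have hcN : (j-1) + 1 ≤ N := by omega
      apply psi_sum_pair hNR hcN
      · rw [hcast]; linarith
      · rw [hcast]; linarith

end Psi


-- cube facts
lemma unitCube_eq (d : ℕ) : unitCube d = Set.pi Set.univ (fun _ : Fin d => Icc (0:ℝ) 1) := by
  ext x; simp [unitCube, Set.mem_pi, Pi.le_def, forall_and]

lemma convex_unitCube (d : ℕ) : Convex ℝ (unitCube d) := by
  rw [unitCube_eq]; exact convex_pi fun i _ => convex_Icc 0 1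

lemma uniqueDiffOn_unitCube (d : ℕ) : UniqueDiffOn ℝ (unitCube d) := by
  rw [unitCube_eq]
  exact UniqueDiffOn.pi fun i _ => uniqueDiffOn_Icc one_pos

lemma closure_interior_unitCube (d : ℕ) : closure (interior (unitCube d)) = unitCube d := by
  rw [unitCube_eq, interior_pi_set (Set.finite_univ)]
  simp only [interior_Icc]
  rw [closure_pi_set]
  simp [closure_Ioo]

lemma mem_closure_interior_unitCube {d : ℕ} {x : Fin d → ℝ} (hx : x ∈ unitCube d) :
    x ∈ closure (interior (unitCube d)) := by rw [closure_interior_unitCube]; exact hx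

-- the basic partial derivative
noncomputable def pd (d : ℕ) (i : Fin d) (f : (Fin d → ℝ) → ℝ) : (Fin d → ℝ) → ℝ :=
  fun x => fderivWithin ℝ f (unitCube d) x (Pi.single i 1)

lemma iterPartial_cons (d : ℕ) (i : Fin d) (l : List (Fin d)) (f : (Fin d → ℝ) → ℝ) :
    iterPartialWithin d (unitCube d) (i :: l) f = iterPartialWithin d (unitCube d) l (pd d i f) := rfl

lemma contDiffOn_pd {d : ℕ} {m : WithTop ℕ∞} {f : (Fin d → ℝ) → ℝ}
    (hf : ContDiffOn ℝ (m + 1) f (unitCube d)) (i : Fin d) :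
    ContDiffOn ℝ m (pd d i f) (unitCube d) := by
  have h1 : ContDiffOn ℝ m (fderivWithin ℝ f (unitCube d)) (unitCube d) :=
    hf.fderivWithin (uniqueDiffOn_unitCube d) le_rfl
  exact h1.clm_apply contDiffOn_const

lemma iterPartial_congr {d : ℕ} {l : List (Fin d)} {f g : (Fin d → ℝ) → ℝ}
    (h : ∀ z ∈ unitCube d, f z = g z) :
    ∀ y ∈ unitCube d, iterPartialWithin d (unitCube d) l f y = iterPartialWithin d (unitCube d) l g y := by
  induction l generalizing f g with
  | nil => exact h
  | cons i t ih =>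
    rw [iterPartial_cons, iterPartial_cons]
    refine ih fun z hz => ?_
    unfold pd
    rw [fderivWithin_congr (fun w hw => h w hw) (h z hz)]

lemma pd_comm {d : ℕ} {f : (Fin d → ℝ) → ℝ}
    (hf : ContDiffOn ℝ 2 f (unitCube d)) (i j : Fin d) :
    ∀ z ∈ unitCube d, pd d i (pd d j f) z = pd d j (pd d i f) z := by
  intro z hz
  have hud := uniqueDiffOn_unitCube d
  have hdiff : DifferentiableWithinAt ℝ (fderivWithin ℝ f (unitCube d)) (unitCube d) z := by
    have : ContDiffOn ℝ 1 (fderivWithin ℝ f (unitCube d)) (unitCube d) :=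
      hf.fderivWithin hud (by norm_num)
    exact (this z hz).differentiableWithinAt one_ne_zero
  have hsymm : IsSymmSndFDerivWithinAt ℝ f (unitCube d) z :=
    (hf z hz).isSymmSndFDerivWithinAt (by simp) hud (mem_closure_interior_unitCube hz) hz
  have key : ∀ a b : Fin d, pd d a (pd d b f) z =
      fderivWithin ℝ (fderivWithin ℝ f (unitCube d)) (unitCube d) z (Pi.single a 1) (Pi.single b 1) := by
    intro a b
    unfold pd
    rw [fderivWithin_clm_apply (hud z hz) hdiff (differentiableWithinAt_const _)]
    rw [fderivWithin_const_apply]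
    simp
  rw [key, key, hsymm.eq]

lemma length_le_contDiffOn {d : ℕ} {f : (Fin d → ℝ) → ℝ} {m : ℕ} {l : List (Fin d)}
    (hf : ContDiffOn ℝ (l.length + m : ℕ) f (unitCube d)) :
    ContDiffOn ℝ (m : ℕ) (iterPartialWithin d (unitCube d) l f) (unitCube d) := by
  induction l generalizing f with
  | nil => simpa [iterPartialWithin] using hf
  | cons i t ih =>
    rw [iterPartial_cons]
    refine ih ?_
    have : ContDiffOn ℝ ((t.length + m : ℕ) + 1) f (unitCube d) := by
      convert hf using 2
      push_cast [List.length_cons]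
      ring
    exact contDiffOn_pd this i

lemma iterPartial_perm {d : ℕ} {l₁ l₂ : List (Fin d)} (hp : l₁.Perm l₂) :
    ∀ f : (Fin d → ℝ) → ℝ, ContDiffOn ℝ (l₁.length : ℕ) f (unitCube d) →
    ∀ y ∈ unitCube d, iterPartialWithin d (unitCube d) l₁ f y = iterPartialWithin d (unitCube d) l₂ f y := by
  induction hp with
  | nil => intro f _ y _; rfl
  | cons a p ih =>
    intro f hf y hy
    rw [iterPartial_cons, iterPartial_cons]
    refine ih (pd d a f) ?_ y hy
    refine contDiffOn_pd ?_ a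
    exact hf.of_le (by push_cast [List.length_cons]; exact le_refl _)
  | swap a b l =>
    intro f hf y hy
    rw [iterPartial_cons, iterPartial_cons, iterPartial_cons, iterPartial_cons]
    refine iterPartial_congr ?_ y hy
    intro z hz
    refine pd_comm ?_ a b z hz
    refine hf.of_le ?_
    simp only [List.length_cons]
    norm_cast
    omega
  | trans p q ih1 ih2 =>
    intro f hf y hy
    rw [ih1 f hf y hy]
    refine ih2 f ?_ y hy
    rwa [← p.length_eq]

lemma multiIndexList_count {d : ℕ} (α : Fin d → ℕ) (j : Fin d) :
    List.count j (multiIndexList d α) = α j := by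
  unfold multiIndexList
  rw [List.count_flatten]
  rw [List.map_ofFn]
  rw [List.sum_ofFn]
  simp only [Function.comp]
  rw [Fintype.sum_eq_single j (fun k hk => by
    rw [List.count_replicate]
    simp [hk])]
  rw [List.count_replicate]
  simp

lemma multiIndexList_length {d : ℕ} (α : Fin d → ℕ) :
    (multiIndexList d α).length = ∑ k, α k := by
  unfold multiIndexList
  rw [List.length_flatten, List.map_ofFn, List.sum_ofFn]
  simp

lemma multiIndexList_zero {d : ℕ} : multiIndexList d 0 = [] := by
  have := multiIndexList_length (d := d) 0
  simp at this
  exact this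

lemma multiPartialWithin_zero {d : ℕ} (f : (Fin d → ℝ) → ℝ) :
    multiPartialWithin d (unitCube d) 0 f = f := by
  unfold multiPartialWithin
  rw [multiIndexList_zero]
  rfl

lemma multiIndexList_succ_perm {d : ℕ} (β : Fin d → ℕ) (k : Fin d) :
    (multiIndexList d (β + Pi.single k 1)).Perm (k :: multiIndexList d β) := by
  rw [List.perm_iff_count]
  intro j
  rw [multiIndexList_count, List.count_cons, multiIndexList_count]
  simp only [Pi.add_apply, Pi.single_apply]
  by_cases h : j = k
  · simp [h]
  · simp [h, Ne.symm h]

/-- Commutation: `D^{β+e_k} f = D^β (D_k f)` on the cube. -/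
lemma multiPartial_succ {d : ℕ} (β : Fin d → ℕ) (k : Fin d) {f : (Fin d → ℝ) → ℝ}
    (hf : ContDiffOn ℝ ((∑ j, β j) + 1 : ℕ) f (unitCube d)) :
    ∀ y ∈ unitCube d,
      multiPartialWithin d (unitCube d) (β + Pi.single k 1) f y =
      multiPartialWithin d (unitCube d) β (pd d k f) y := by
  intro y hy
  have h1 := iterPartial_perm (multiIndexList_succ_perm β k) f (by
    rw [multiIndexList_length]
    convert hf using 2
    simp [Pi.single_apply, Finset.sum_add_distrib]) y hy
  unfold multiPartialWithin
  rw [h1, iterPartial_cons]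

lemma mem_multiIndicesLT {d n : ℕ} {α : Fin d → ℕ} :
    α ∈ multiIndicesLT d n ↔ (∑ k, α k) < n := by
  unfold multiIndicesLT
  rw [Finset.mem_filter]
  constructor
  · exact fun h => h.2
  · intro h
    refine ⟨?_, h⟩
    rw [Fintype.mem_piFinset]
    intro j
    rw [Finset.mem_range]
    calc α j ≤ ∑ k, α k := Finset.single_le_sum (fun k _ => Nat.zero_le _) (Finset.mem_univ j)
      _ < n := h

lemma multiIndicesLT_zero (d : ℕ) : multiIndicesLT d 0 = ∅ := by
  ext α
  simp [mem_multiIndicesLT]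

lemma prod_pow_succ {d : ℕ} (u : Fin d → ℝ) (β : Fin d → ℕ) (k : Fin d) :
    ∏ j, u j ^ (β + Pi.single k 1 : Fin d → ℕ) j = u k * ∏ j, u j ^ β j := by
  rw [← Finset.prod_compl_mul_prod {k}, ← Finset.prod_compl_mul_prod {k} (f := fun j => u j ^ β j)]
  simp only [Finset.prod_singleton]
  have h1 : ∀ j ∈ ({k} : Finset (Fin d))ᶜ, u j ^ (β + Pi.single k 1 : Fin d → ℕ) j = u j ^ β j := by
    intro j hj
    simp only [Finset.mem_compl, Finset.mem_singleton] at hj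
    simp [Pi.single_apply, hj]
  rw [Finset.prod_congr rfl h1]
  have h2 : (β + Pi.single k 1 : Fin d → ℕ) k = β k + 1 := by simp
  rw [h2, pow_succ]
  ring

lemma prod_factorial_succ {d : ℕ} (β : Fin d → ℕ) (k : Fin d) :
    (∏ j, ((β + Pi.single k 1 : Fin d → ℕ) j).factorial : ℝ) = (β k + 1) * ∏ j, ((β j).factorial : ℝ) := by
  push_cast
  rw [← Finset.prod_compl_mul_prod {k}, ← Finset.prod_compl_mul_prod {k}
    (f := fun j => ((β j).factorial : ℝ))]
  simp only [Finset.prod_singleton]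
  have h1 : ∀ j ∈ ({k} : Finset (Fin d))ᶜ, (((β + Pi.single k 1 : Fin d → ℕ) j).factorial : ℝ) = ((β j).factorial : ℝ) := by
    intro j hj
    simp only [Finset.mem_compl, Finset.mem_singleton] at hj
    simp [Pi.single_apply, hj]
  rw [Finset.prod_congr rfl h1]
  have h2 : (β + Pi.single k 1 : Fin d → ℕ) k = β k + 1 := by simp
  rw [h2, Nat.factorial_succ]
  push_cast
  ring

lemma sum_succ_single {d : ℕ} (β : Fin d → ℕ) (k : Fin d) :
    (∑ j, (β + Pi.single k 1 : Fin d → ℕ) j) = (∑ j, β j) + 1 := by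
  simp [Finset.sum_add_distrib, Pi.single_apply]

/-- Reindexing: derivative of the `t`-polynomial matches the Taylor polynomials
of the partial derivatives. -/
lemma reindex_identity {d n : ℕ} {f : (Fin d → ℝ) → ℝ}
    (hf : ContDiffOn ℝ ((n + 1 : ℕ) : WithTop ℕ∞) f (unitCube d))
    {a : Fin d → ℝ} (ha : a ∈ unitCube d) (x : Fin d → ℝ) (t : ℝ) :
    ∑ α ∈ multiIndicesLT d (n+1),
      multiPartialWithin d (unitCube d) α f a / (∏ j, ((α j).factorial : ℝ)) *
        (∏ j, (x j - a j) ^ α j) * ((∑ j, α j : ℕ) * t ^ ((∑ j, α j) - 1))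
    = ∑ k, (x k - a k) *
        ∑ β ∈ multiIndicesLT d n,
          multiPartialWithin d (unitCube d) β (pd d k f) a / (∏ j, ((β j).factorial : ℝ)) *
            ((∏ j, (x j - a j) ^ β j) * t ^ (∑ j, β j)) := by
  -- expand |α| = ∑ k α k inside and swap sums
  have step1 : ∀ α ∈ multiIndicesLT d (n+1),
      multiPartialWithin d (unitCube d) α f a / (∏ j, ((α j).factorial : ℝ)) *
        (∏ j, (x j - a j) ^ α j) * ((∑ j, α j : ℕ) * t ^ ((∑ j, α j) - 1))
      = ∑ k, (α k : ℝ) * (multiPartialWithin d (unitCube d) α f a / (∏ j, ((α j).factorial : ℝ)) *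
          (∏ j, (x j - a j) ^ α j) * t ^ ((∑ j, α j) - 1)) := by
    intro α _
    rw [← Finset.sum_mul, ← Nat.cast_sum]
    ring
  rw [Finset.sum_congr rfl step1, Finset.sum_comm]
  refine Finset.sum_congr rfl fun k _ => ?_
  rw [Finset.mul_sum]
  -- drop the terms with α k = 0, then reindex β ↦ β + e_k
  set F : Finset (Fin d → ℕ) := (multiIndicesLT d (n+1)).filter (fun α => 0 < α k) with hFdef
  have hzero : ∀ α ∈ multiIndicesLT d (n+1), α ∉ F →
      (α k : ℝ) * (multiPartialWithin d (unitCube d) α f a / (∏ j, ((α j).factorial : ℝ)) *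
        (∏ j, (x j - a j) ^ α j) * t ^ ((∑ j, α j) - 1)) = 0 := by
    intro α hα hαF
    have : α k = 0 := by
      by_contra hc
      exact hαF (Finset.mem_filter.mpr ⟨hα, Nat.pos_of_ne_zero hc⟩)
    rw [this]
    simp
  rw [← Finset.sum_subset (Finset.filter_subset _ _) hzero]
  symm
  refine Finset.sum_nbij' (i := fun β => β + Pi.single k 1)
    (j := fun α => fun j => α j - (Pi.single k 1 : Fin d → ℕ) j) ?_ ?_ ?_ ?_ ?_
  · -- membership forward
    intro β hβ
    rw [mem_multiIndicesLT] at hβ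
    refine Finset.mem_filter.mpr ⟨mem_multiIndicesLT.mpr ?_, by simp⟩
    rw [sum_succ_single]
    omega
  · -- membership backward
    intro α hα
    rw [Finset.mem_filter, mem_multiIndicesLT] at hα
    obtain ⟨hα1, hα2⟩ := hα
    rw [mem_multiIndicesLT]
    have hrec : (fun j => α j - (Pi.single k 1 : Fin d → ℕ) j) + Pi.single k 1 = α := by
      funext j
      simp only [Pi.add_apply, Pi.single_apply]
      rcases eq_or_ne j k with h | h
      · subst h
        rw [if_pos rfl]
        omega
      · rw [if_neg h]
        omega
    have hs2 := sum_succ_single (fun j => α j - (Pi.single k 1 : Fin d → ℕ) j) k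
    rw [hrec] at hs2
    omega
  · -- left inverse
    intro β hβ
    funext j
    simp only [Pi.add_apply, Pi.single_apply]
    by_cases h : j = k <;> simp [h]
  · -- right inverse
    intro α hα
    rw [Finset.mem_filter] at hα
    obtain ⟨hα1, hα2⟩ := hα
    funext j
    simp only [Pi.add_apply, Pi.single_apply]
    rcases eq_or_ne j k with h | h
    · subst h
      rw [if_pos rfl]
      omega
    · rw [if_neg h]
      omega
  · -- values agree
    intro β hβ
    rw [mem_multiIndicesLT] at hβ
    have hD : multiPartialWithin d (unitCube d) (β + Pi.single k 1) f a
        = multiPartialWithin d (unitCube d) β (pd d k f) a := by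
      refine multiPartial_succ β k (hf.of_le ?_) a ha
      have h1 : (∑ j, β j) + 1 ≤ n + 1 := by omega
      exact_mod_cast Nat.cast_le.mpr h1
    have hfac := prod_factorial_succ β k
    have hpow := prod_pow_succ (fun j => x j - a j) β k
    have hsum := sum_succ_single β k
    rw [hD.symm] at *
    rw [hfac, hpow, hsum, hD]
    have hβk : ((β k : ℝ) + 1) ≠ 0 := by positivity
    have hfach : (∏ j, ((β j).factorial : ℝ)) ≠ 0 := by positivity
    simp only [Nat.add_sub_cancel]
    have h2 : (((β + Pi.single k 1 : Fin d → ℕ) k : ℝ)) = (β k : ℝ) + 1 := by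
      simp
    rw [h2]
    field_simp

lemma fderiv_eval_sum {d : ℕ} (L : (Fin d → ℝ) →L[ℝ] ℝ) (v : Fin d → ℝ) :
    L v = ∑ k, v k * L (Pi.single k 1) := by
  have hv : v = ∑ k, v k • (Pi.single k 1 : Fin d → ℝ) := by
    funext j
    rw [Finset.sum_apply]
    simp [Pi.single_apply, mul_ite]
  calc L v = L (∑ k, v k • (Pi.single k 1 : Fin d → ℝ)) := by rw [← hv]
    _ = ∑ k, v k * L (Pi.single k 1) := by
        rw [map_sum]
        refine Finset.sum_congr rfl fun k _ => ?_
        rw [map_smul]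
        rfl

lemma taylor_like_bound {d : ℕ} : ∀ (n : ℕ) (f : (Fin d → ℝ) → ℝ),
    ContDiffOn ℝ (n : ℕ) f (unitCube d) →
    (∀ α : Fin d → ℕ, (∑ k, α k) ≤ n → ∀ y ∈ unitCube d,
      |multiPartialWithin d (unitCube d) α f y| ≤ 1) →
    ∀ a ∈ unitCube d, ∀ x ∈ unitCube d,
      |f x - ∑ α ∈ multiIndicesLT d n,
          multiPartialWithin d (unitCube d) α f a / (∏ k, ((α k).factorial : ℝ)) *
            ∏ k, (x k - a k) ^ α k|
        ≤ (∑ k, |x k - a k|) ^ n / (n.factorial : ℝ) := by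
  intro n
  induction n with
  | zero =>
    intro f hf hb a ha x hx
    rw [multiIndicesLT_zero]
    simp only [Finset.sum_empty, sub_zero, pow_zero, Nat.factorial_zero, Nat.cast_one, div_one]
    have := hb 0 (by simp) x hx
    rwa [multiPartialWithin_zero] at this
  | succ n ih =>
    intro f hf hb a ha x hx
    set L : ℝ := ∑ k, |x k - a k| with hLdef
    have hL0 : 0 ≤ L := Finset.sum_nonneg fun k _ => abs_nonneg _
    set γ : ℝ → (Fin d → ℝ) := fun t => a + t • (x - a) with hγdef
    have hγcoord : ∀ t k, γ t k = a k + t * (x k - a k) := fun t k => rfl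
    have hmaps : MapsTo γ (Icc 0 1) (unitCube d) := by
      intro t ht k
      have h1 := ha k
      have h2 := hx k
      simp only [mem_Icc] at *
      rw [hγcoord]
      constructor
      · nlinarith [h1.1, h1.2, h2.1, h2.2, ht.1, ht.2]
      · nlinarith [h1.1, h1.2, h2.1, h2.2, ht.1, ht.2]
    have hfc : ContDiffOn ℝ ((n : WithTop ℕ∞) + 1) f (unitCube d) := by
      exact_mod_cast hf
    -- the one-variable remainder function
    set h : ℝ → ℝ := fun t => f (γ t) - ∑ α ∈ multiIndicesLT d (n+1),
      multiPartialWithin d (unitCube d) α f a / (∏ j, ((α j).factorial : ℝ)) *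
        (∏ j, (x j - a j) ^ α j) * t ^ (∑ j, α j) with hhdef
    set h' : ℝ → ℝ := fun t => (∑ k, (x k - a k) * pd d k f (γ t)) -
      ∑ α ∈ multiIndicesLT d (n+1),
        multiPartialWithin d (unitCube d) α f a / (∏ j, ((α j).factorial : ℝ)) *
          (∏ j, (x j - a j) ^ α j) * ((∑ j, α j : ℕ) * t ^ ((∑ j, α j) - 1)) with hh'def
    -- derivative of h within Icc 0 1
    have hderiv : ∀ t ∈ Ico (0:ℝ) 1, HasDerivWithinAt h (h' t) (Icc 0 1) t := by
      intro t ht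
      have htIcc : t ∈ Icc (0:ℝ) 1 := Ico_subset_Icc_self ht
      have hγd : HasDerivWithinAt γ (x - a) (Icc 0 1) t := by
        have := (((hasDerivAt_id t).smul_const (x - a)).const_add a)
        rw [one_smul] at this
        exact this.hasDerivWithinAt
      have hγmem : γ t ∈ unitCube d := hmaps htIcc
      have hfd : DifferentiableWithinAt ℝ f (unitCube d) (γ t) :=
        (hf.differentiableOn (by simp)) (γ t) hγmem
      have hcomp : HasDerivWithinAt (fun u => f (γ u))
          (fderivWithin ℝ f (unitCube d) (γ t) (x - a)) (Icc 0 1) t := by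
        have := hfd.hasFDerivWithinAt.comp_hasDerivWithinAt t hγd hmaps
        exact this
      have hval : fderivWithin ℝ f (unitCube d) (γ t) (x - a)
          = ∑ k, (x k - a k) * pd d k f (γ t) := by
        rw [fderiv_eval_sum (fderivWithin ℝ f (unitCube d) (γ t)) (x - a)]
        rfl
      rw [hval] at hcomp
      have hpoly : HasDerivAt (fun u : ℝ => ∑ α ∈ multiIndicesLT d (n+1),
          multiPartialWithin d (unitCube d) α f a / (∏ j, ((α j).factorial : ℝ)) *
            (∏ j, (x j - a j) ^ α j) * u ^ (∑ j, α j))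
          (∑ α ∈ multiIndicesLT d (n+1),
            multiPartialWithin d (unitCube d) α f a / (∏ j, ((α j).factorial : ℝ)) *
              (∏ j, (x j - a j) ^ α j) * ((∑ j, α j : ℕ) * t ^ ((∑ j, α j) - 1))) t := by
        refine HasDerivAt.fun_sum fun α _ => ?_
        exact (hasDerivAt_pow (∑ j, α j) t).const_mul _
      exact hcomp.sub hpoly.hasDerivWithinAt
    -- derivative bound
    have hbound' : ∀ t ∈ Ico (0:ℝ) 1, |h' t| ≤ L * ((t * L) ^ n / (n.factorial : ℝ)) := by
      intro t ht
      have htIcc : t ∈ Icc (0:ℝ) 1 := Ico_subset_Icc_self ht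
      -- per-direction remainder bound from the induction hypothesis
      have hRk : ∀ k, |pd d k f (γ t) - ∑ β ∈ multiIndicesLT d n,
          multiPartialWithin d (unitCube d) β (pd d k f) a / (∏ j, ((β j).factorial : ℝ)) *
            ((∏ j, (x j - a j) ^ β j) * t ^ (∑ j, β j))|
          ≤ (t * L) ^ n / (n.factorial : ℝ) := by
        intro k
        have hpdc : ContDiffOn ℝ (n : ℕ) (pd d k f) (unitCube d) := contDiffOn_pd hfc k
        have hb' : ∀ β : Fin d → ℕ, (∑ j, β j) ≤ n → ∀ y ∈ unitCube d,
            |multiPartialWithin d (unitCube d) β (pd d k f) y| ≤ 1 := by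
          intro β hβ y hy
          rw [← multiPartial_succ β k (hf.of_le (by
            exact_mod_cast Nat.cast_le.mpr (by omega : (∑ j, β j) + 1 ≤ n + 1))) y hy]
          exact hb (β + Pi.single k 1) (by rw [sum_succ_single]; omega) y hy
        have ihk := ih (pd d k f) hpdc hb' a ha (γ t) (hmaps htIcc)
        have heq1 : ∀ β : Fin d → ℕ, (∏ j, (γ t j - a j) ^ β j)
            = (∏ j, (x j - a j) ^ β j) * t ^ (∑ j, β j) := by
          intro β
          have : ∀ j, γ t j - a j = t * (x j - a j) := by
            intro j; rw [hγcoord]; ring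
          calc (∏ j, (γ t j - a j) ^ β j) = ∏ j, (t ^ β j * (x j - a j) ^ β j) := by
                refine Finset.prod_congr rfl fun j _ => ?_
                rw [this j, mul_pow]
            _ = (∏ j, t ^ β j) * ∏ j, (x j - a j) ^ β j := Finset.prod_mul_distrib
            _ = (∏ j, (x j - a j) ^ β j) * t ^ (∑ j, β j) := by
                rw [Finset.prod_pow_eq_pow_sum]
                ring
        have heq2 : (∑ j, |γ t j - a j|) = t * L := by
          rw [hLdef, Finset.mul_sum]
          refine Finset.sum_congr rfl fun j _ => ?_
          have : γ t j - a j = t * (x j - a j) := by rw [hγcoord]; ring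
          rw [this, abs_mul, abs_of_nonneg ht.1]
        rw [heq2] at ihk
        calc |pd d k f (γ t) - ∑ β ∈ multiIndicesLT d n,
            multiPartialWithin d (unitCube d) β (pd d k f) a / (∏ j, ((β j).factorial : ℝ)) *
              ((∏ j, (x j - a j) ^ β j) * t ^ (∑ j, β j))|
            = |pd d k f (γ t) - ∑ β ∈ multiIndicesLT d n,
              multiPartialWithin d (unitCube d) β (pd d k f) a / (∏ j, ((β j).factorial : ℝ)) *
                ∏ j, (γ t j - a j) ^ β j| := by
              congr 1
              congr 1
              refine Finset.sum_congr rfl fun β _ => ?_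
              rw [heq1 β]
          _ ≤ (t * L) ^ n / (n.factorial : ℝ) := ihk
      -- rewrite h' t as a sum over directions
      have hsplit : h' t = ∑ k, (x k - a k) * (pd d k f (γ t) - ∑ β ∈ multiIndicesLT d n,
          multiPartialWithin d (unitCube d) β (pd d k f) a / (∏ j, ((β j).factorial : ℝ)) *
            ((∏ j, (x j - a j) ^ β j) * t ^ (∑ j, β j))) := by
        rw [hh'def]
        simp only
        rw [reindex_identity (by exact_mod_cast hf) ha x t]
        rw [← Finset.sum_sub_distrib]
        refine Finset.sum_congr rfl fun k _ => ?_
        rw [mul_sub]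
      rw [hsplit]
      calc |∑ k, (x k - a k) * (pd d k f (γ t) - ∑ β ∈ multiIndicesLT d n,
          multiPartialWithin d (unitCube d) β (pd d k f) a / (∏ j, ((β j).factorial : ℝ)) *
            ((∏ j, (x j - a j) ^ β j) * t ^ (∑ j, β j)))|
          ≤ ∑ k, |x k - a k| * ((t * L) ^ n / (n.factorial : ℝ)) := by
            refine (Finset.abs_sum_le_sum_abs _ _).trans (Finset.sum_le_sum fun k _ => ?_)
            rw [abs_mul]
            exact mul_le_mul_of_nonneg_left (hRk k) (abs_nonneg _)
        _ = L * ((t * L) ^ n / (n.factorial : ℝ)) := by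
            rw [← Finset.sum_mul, hLdef]
    -- comparison along [0,1]
    have hcont : ContinuousOn h (Icc 0 1) := by
      rw [hhdef]
      refine ContinuousOn.sub ?_ ?_
      · have hγc : Continuous γ := by
          rw [hγdef]; fun_prop
        exact (hf.continuousOn).comp hγc.continuousOn hmaps
      · exact (continuous_finset_sum _ fun α _ =>
          continuous_const.mul (continuous_pow (∑ j, α j))).continuousOn
    have hh0 : h 0 = 0 := by
      rw [hhdef]
      simp only
      have hγ0 : γ 0 = a := by
        funext k
        rw [hγcoord]; ring
      rw [hγ0]
      rw [Finset.sum_eq_single_of_mem (0 : Fin d → ℕ)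
        (mem_multiIndicesLT.mpr (by simp))]
      · rw [multiPartialWithin_zero]
        simp
      · intro α hα hne
        have : (∑ j, α j) ≠ 0 := by
          intro hc
          apply hne
          funext j
          have := Finset.sum_eq_zero_iff.mp hc j (Finset.mem_univ j)
          simpa using this
        rw [zero_pow this]
        ring
    have hB : ∀ t : ℝ, HasDerivAt (fun u : ℝ => L^(n+1) / ((n+1).factorial : ℝ) * u^(n+1))
        (L^(n+1) / ((n+1).factorial : ℝ) * (((n+1) : ℕ) * t^n)) t := by
      intro t
      have := (hasDerivAt_pow (n+1) t).const_mul (L^(n+1) / ((n+1).factorial : ℝ))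
      simpa using this
    have hB'le : ∀ t ∈ Ico (0:ℝ) 1, ‖h' t‖ ≤ L^(n+1) / ((n+1).factorial : ℝ) * (((n+1) : ℕ) * t^n) := by
      intro t ht
      rw [Real.norm_eq_abs]
      refine (hbound' t ht).trans (le_of_eq ?_)
      have hfacpos : (0:ℝ) < (n.factorial : ℝ) := by exact_mod_cast n.factorial_pos
      rw [mul_pow, Nat.factorial_succ]
      push_cast
      field_simp
      ring
    have hmain := image_norm_le_of_norm_deriv_right_le_deriv_boundary hcont
      (fun t ht => (hderiv t ht).mono_of_mem_nhdsWithin (Icc_mem_nhdsGE_of_mem ht))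
      (by rw [hh0]; simp) hB hB'le (right_mem_Icc.mpr zero_le_one)
    -- evaluate at t = 1
    have hγ1 : γ 1 = x := by
      funext k
      rw [hγcoord]; ring
    have hh1 : h 1 = f x - ∑ α ∈ multiIndicesLT d (n+1),
        multiPartialWithin d (unitCube d) α f a / (∏ j, ((α j).factorial : ℝ)) *
          ∏ j, (x j - a j) ^ α j := by
      rw [hhdef]
      simp only
      rw [hγ1]
      congr 1
      refine Finset.sum_congr rfl fun α _ => ?_
      rw [one_pow, mul_one]
    rw [Real.norm_eq_abs, hh1] at hmain
    calc |f x - ∑ α ∈ multiIndicesLT d (n+1),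
        multiPartialWithin d (unitCube d) α f a / (∏ j, ((α j).factorial : ℝ)) *
          ∏ j, (x j - a j) ^ α j|
        ≤ L^(n+1) / ((n+1).factorial : ℝ) * (1:ℝ)^(n+1) := hmain
      _ = L^(n+1) / ((n+1).factorial : ℝ) := by rw [one_pow, mul_one]

/-- Error of the local Taylor approximation:
`max_{x ∈ [0,1]^d} |f(x) - f_N(x)| ≤ (2^d · d^n / n!) · N^{-n}`. -/
theorem local_taylor_error (d n N : ℕ) (hd : 1 ≤ d) (hn : 1 ≤ n) (hN : 1 ≤ N)
    (f : (Fin d → ℝ) → ℝ)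
    (hf : ContDiffOn ℝ n f (unitCube d))
    (hbound : ∀ α : Fin d → ℕ, (∑ k, α k) ≤ n →
      ∀ x ∈ unitCube d, |multiPartialWithin d (unitCube d) α f x| ≤ 1) :
    ∀ x ∈ unitCube d,
      |f x - localTaylor d n N f x| ≤
        2 ^ d * (d : ℝ) ^ n / (Nat.factorial n) / (N : ℝ) ^ n := by
  intro x hx
  have hNR : 0 < (N:ℝ) := by exact_mod_cast hN
  have hfac : (0:ℝ) < (n.factorial : ℝ) := by exact_mod_cast n.factorial_pos
  set C : ℝ := (2 * d / (3 * N)) ^ n / (n.factorial : ℝ) with hCdef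
  -- partition of unity
  have hphi_sum : ∑ m ∈ Fintype.piFinset (fun _ : Fin d => Finset.range (N + 1)),
      phiBump d N m x = 1 := by
    unfold phiBump
    rw [← Finset.prod_univ_sum (fun _ : Fin d => Finset.range (N + 1))
      (fun k j => psiBump N j (x k))]
    rw [Finset.prod_eq_one fun k _ => psi_sum hN (hx k).1 (hx k).2]
  have hphi_nonneg : ∀ m, 0 ≤ phiBump d N m x :=
    fun m => Finset.prod_nonneg fun k _ => psi_nonneg hNR
  -- pointwise Taylor bound on the support
  have hkey : ∀ m ∈ Fintype.piFinset (fun _ : Fin d => Finset.range (N + 1)),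
      phiBump d N m x ≠ 0 → |f x - taylorPoly d n N f m x| ≤ C := by
    intro m hm hphi
    have hmk : ∀ k, m k ≤ N := by
      intro k
      have := Fintype.mem_piFinset.mp hm k
      rw [Finset.mem_range] at this
      omega
    have ha : (fun k => (m k : ℝ) / N) ∈ unitCube d := by
      intro k
      constructor
      · positivity
      · rw [div_le_one hNR]
        exact_mod_cast hmk k
    have hsupp : ∀ k, |x k - (m k : ℝ) / N| ≤ 2 / (3 * N) := by
      intro k
      have hψ : psiBump N (m k) (x k) ≠ 0 := by
        intro hc
        exact hphi (Finset.prod_eq_zero (Finset.mem_univ k) hc)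
      have := psi_support hNR hψ
      rw [habs hNR]
      rw [div_le_div_iff₀ hNR (by positivity)]
      nlinarith
    have htb := taylor_like_bound n f hf hbound (fun k => (m k : ℝ) / N) ha x hx
    refine htb.trans ?_
    rw [hCdef]
    refine (div_le_div_iff_of_pos_right hfac).mpr ?_
    refine pow_le_pow_left₀ (Finset.sum_nonneg fun k _ => abs_nonneg _) ?_ n
    calc (∑ k, |x k - (m k : ℝ)/N|) ≤ ∑ _k : Fin d, 2/(3*(N:ℝ)) :=
          Finset.sum_le_sum fun k _ => hsupp k
      _ = (d:ℝ) * (2/(3*N)) := by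
          rw [Finset.sum_const]
          simp [mul_comm]
      _ = 2 * d / (3 * N) := by ring
  -- assemble
  have hrw : f x - localTaylor d n N f x =
      ∑ m ∈ Fintype.piFinset (fun _ : Fin d => Finset.range (N + 1)),
        phiBump d N m x * (f x - taylorPoly d n N f m x) := by
    unfold localTaylor
    have : ∀ m ∈ Fintype.piFinset (fun _ : Fin d => Finset.range (N + 1)),
        phiBump d N m x * (f x - taylorPoly d n N f m x)
        = phiBump d N m x * f x - phiBump d N m x * taylorPoly d n N f m x :=
      fun m _ => mul_sub _ _ _
    rw [Finset.sum_congr rfl this, Finset.sum_sub_distrib, ← Finset.sum_mul, hphi_sum, one_mul]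
  have hCle : |f x - localTaylor d n N f x| ≤ C := by
    rw [hrw]
    calc |∑ m ∈ Fintype.piFinset (fun _ : Fin d => Finset.range (N + 1)),
        phiBump d N m x * (f x - taylorPoly d n N f m x)|
        ≤ ∑ m ∈ Fintype.piFinset (fun _ : Fin d => Finset.range (N + 1)),
          |phiBump d N m x * (f x - taylorPoly d n N f m x)| :=
          Finset.abs_sum_le_sum_abs _ _
      _ ≤ ∑ m ∈ Fintype.piFinset (fun _ : Fin d => Finset.range (N + 1)),
          phiBump d N m x * C := by
          refine Finset.sum_le_sum fun m hm => ?_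
          rw [abs_mul, abs_of_nonneg (hphi_nonneg m)]
          rcases eq_or_ne (phiBump d N m x) 0 with h0 | h0
          · rw [h0]
            simp
          · exact mul_le_mul_of_nonneg_left (hkey m hm h0) (hphi_nonneg m)
      _ = C := by rw [← Finset.sum_mul, hphi_sum, one_mul]
  refine hCle.trans ?_
  rw [hCdef]
  have h2d : (1:ℝ) ≤ 2^d := one_le_pow₀ one_le_two
  have h1 : (2*(d:ℝ)/(3*N))^n ≤ ((d:ℝ)/N)^n := by
    have hdN : 0 ≤ (d:ℝ)/N := by positivity
    refine pow_le_pow_left₀ (by positivity) ?_ n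
    have he : 2*(d:ℝ)/(3*N) = (2/3)*((d:ℝ)/N) := by ring
    rw [he]
    linarith
  calc (2*(d:ℝ)/(3*N))^n / (n.factorial : ℝ) ≤ ((d:ℝ)/N)^n / (n.factorial : ℝ) := by gcongr
    _ = (d:ℝ)^n / (n.factorial : ℝ) / (N:ℝ)^n := by rw [div_pow]; ring
    _ ≤ 2^d * ((d:ℝ)^n / (n.factorial : ℝ) / (N:ℝ)^n) := by
        have hb0 : 0 ≤ (d:ℝ)^n / (n.factorial : ℝ) / (N:ℝ)^n := by positivity
        nlinarith
    _ = 2^d * (d:ℝ)^n / (n.factorial : ℝ) / (N:ℝ)^n := by ring
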